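/- Let $g_1, g_2, g_3$ be homogeneous quadratics in $s,t$ over a field of characteristic zero such that the three vectors of coefficients are linearly independent (i.e., $(g_1,g_2,g_3)$ defines a smooth plane conic). Then the $2\times 3$ matrix with rows $(\partial_s g_1, \partial_s g_2, \partial_s g_3)$ and $(\partial_t g_1, \partial_t g_2, \partial_t g_3)$ has rank 2 at every point $(s,t) \ne (0,0)$; equivalently, the three $2\times 2$ minors $\det M_{1,2}, \det M_{1,3}, \det M_{2,3}$ have no common zero on $\mathbb{P}^1$. -/

import Mathlib

open MvPolynomial

/-- Unramifiedness of a smooth conic parameterization (used in Lemma 4.8): if the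
coefficient vectors of the quadratics `g₁, g₂, g₃` are linearly independent, the
`2×3` matrix of partial derivatives has rank 2 at every `(s,t) ≠ (0,0)`. -/
theorem stmt_18 {K : Type*} [Field K] [CharZero K]
    (v : Fin 3 → Fin 3 → K) (hv : LinearIndependent K v)
    (g : Fin 3 → MvPolynomial (Fin 2) K)
    (hg : ∀ i, g i = C (v i 0) * X 0 ^ 2 + C (v i 1) * X 0 * X 1 + C (v i 2) * X 1 ^ 2) :
    ∀ s t : K, (s, t) ≠ (0, 0) →
      (Matrix.of fun (l : Fin 2) (j : Fin 3) => eval ![s, t] (pderiv l (g j))).rank = 2 := by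
  intro s t hst
  set M : Matrix (Fin 2) (Fin 3) K :=
    Matrix.of fun (l : Fin 2) (j : Fin 3) => eval ![s, t] (pderiv l (g j)) with hM
  have hM0 : ∀ j, M 0 j = 2 * v j 0 * s + v j 1 * t := by
    intro j
    simp only [hM, Matrix.of_apply, hg j]
    simp [pderiv_mul, pderiv_pow, pderiv_X]
    ring
  have hM1 : ∀ j, M 1 j = v j 1 * s + 2 * v j 2 * t := by
    intro j
    simp only [hM, Matrix.of_apply, hg j]
    simp [pderiv_mul, pderiv_pow, pderiv_X]
    ring
  have hli : LinearIndependent K M := by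
    refine Fintype.linearIndependent_iff.2 ?_
    intro c hc
    -- the coefficient vector killed by V
    set w : Fin 3 → K := ![2 * c 0 * s, c 0 * t + c 1 * s, 2 * c 1 * t] with hw
    have hV : IsUnit (Matrix.of v) := by
      rw [← Matrix.linearIndependent_rows_iff_isUnit]
      exact hv
    have hinj := Matrix.mulVec_injective_iff_isUnit.2 hV
    have hmv : (Matrix.of v).mulVec w = 0 := by
      funext j
      have hcj := congrFun hc j
      simp only [Fin.sum_univ_two, Pi.add_apply, Pi.smul_apply, smul_eq_mul,
        Pi.zero_apply] at hcj
      rw [hM0 j, hM1 j] at hcj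
      simp only [Matrix.mulVec, dotProduct, Fin.sum_univ_three, Matrix.of_apply, hw,
        Matrix.cons_val_zero, Matrix.cons_val_one, Matrix.head_cons, Pi.zero_apply,
        Matrix.cons_val_two, Matrix.tail_cons]
      linear_combination hcj
    have hw0 : w = 0 := by
      apply hinj
      rw [hmv, Matrix.mulVec_zero]
    have h1 : 2 * c 0 * s = 0 := congrFun hw0 0
    have h2 : c 0 * t + c 1 * s = 0 := congrFun hw0 1
    have h3 : 2 * c 1 * t = 0 := congrFun hw0 2
    have h1' : c 0 * s = 0 := by
      have : (2:K) ≠ 0 := two_ne_zero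
      rcases mul_eq_zero.1 h1 with h | h
      · rcases mul_eq_zero.1 h with h | h
        · exact absurd h this
        · simp [h]
      · simp [mul_eq_zero.2 (Or.inr h)]
    have h3' : c 1 * t = 0 := by
      have : (2:K) ≠ 0 := two_ne_zero
      rcases mul_eq_zero.1 h3 with h | h
      · rcases mul_eq_zero.1 h with h | h
        · exact absurd h this
        · simp [h]
      · simp [mul_eq_zero.2 (Or.inr h)]
    have hst' : s ≠ 0 ∨ t ≠ 0 := by
      by_contra h
      push_neg at h
      exact hst (by simp [h.1, h.2])
    have hc0 : c 0 = 0 ∧ c 1 = 0 := by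
      rcases hst' with hs | ht
      · have hc0 : c 0 = 0 := by
          rcases mul_eq_zero.1 h1' with h | h
          · exact h
          · exact absurd h hs
        have hc1 : c 1 = 0 := by
          rw [hc0, zero_mul, zero_add] at h2
          rcases mul_eq_zero.1 h2 with h | h
          · exact h
          · exact absurd h hs
        exact ⟨hc0, hc1⟩
      · have hc1 : c 1 = 0 := by
          rcases mul_eq_zero.1 h3' with h | h
          · exact h
          · exact absurd h ht
        have hc0 : c 0 = 0 := by
          rw [hc1, zero_mul, add_zero] at h2
          rcases mul_eq_zero.1 h2 with h | h
          · exact h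
          · exact absurd h ht
        exact ⟨hc0, hc1⟩
    intro i
    fin_cases i
    · exact hc0.1
    · exact hc0.2
  have := hli.rank_matrix
  simpa using this
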